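/- In the polynomial ring ℤ[t,z], every common divisor of the three polynomials (1 − t z²)·(1 + t z³)²·(1 − z + z²)², (1 − t z²)·(1 − t z² + 2 t z³ − t z⁴), and (1 + t z³)·(1 − z + z²)²·(1 − z) is a unit (i.e. ±1); equivalently, the greatest common divisor of these three polynomials is 1. -/

import Mathlib

open MvPolynomial

/-- The polynomial ring ℤ[t,z] in two commuting variables. -/
noncomputable abbrev Rtz : Type := MvPolynomial (Fin 2) ℤ

/-- The variable `t` of ℤ[t,z]. -/
noncomputable def tv : Rtz := MvPolynomial.X 0

/-- The variable `z` of ℤ[t,z]. -/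
noncomputable def zv : Rtz := MvPolynomial.X 1

/-- Units of ℤ[t,z] are exactly `±1`. -/
lemma unit_pm_Rtz (p : Rtz) (h : IsUnit p) : p = 1 ∨ p = -1 := by
  have h1 : IsUnit ((finSuccEquiv ℤ 1) p) := h.map _
  obtain ⟨r, hr, hrp⟩ := Polynomial.isUnit_iff.mp h1
  have h2 : IsUnit ((finSuccEquiv ℤ 0) r) := hr.map _
  obtain ⟨s, hs, hsr⟩ := Polynomial.isUnit_iff.mp h2
  have h3 : IsUnit ((isEmptyRingEquiv ℤ (Fin 0)) s) := hs.map _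
  rcases Int.isUnit_iff.mp h3 with h4 | h4
  · left
    have hs1 : s = 1 := by
      have h5 := (isEmptyRingEquiv ℤ (Fin 0)).symm_apply_apply s
      rw [h4, map_one] at h5; exact h5.symm
    have hr1 : r = 1 := by
      apply (finSuccEquiv ℤ 0).injective
      rw [← hsr, hs1]; simp
    apply (finSuccEquiv ℤ 1).injective
    rw [← hrp, hr1]; simp
  · right
    have hs1 : s = -1 := by
      have h5 := (isEmptyRingEquiv ℤ (Fin 0)).symm_apply_apply s
      rw [h4, map_neg, map_one] at h5; exact h5.symm
    have hr1 : r = -1 := by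
      apply (finSuccEquiv ℤ 0).injective
      rw [← hsr, hs1]; simp
    apply (finSuccEquiv ℤ 1).injective
    rw [← hrp, hr1]; simp

/-- Every common divisor in ℤ[t,z] of the three polynomials
`(1-tz²)·(1+tz³)²·(1-z+z²)²`, `(1-tz²)·(1-tz²+2tz³-tz⁴)` and `(1+tz³)·(1-z+z²)²·(1-z)`
is a unit, i.e. equals `±1`; equivalently, the greatest common divisor of these three
polynomials is `1`. -/
theorem gcd_three_quotients_n_four_is_one :
    ∀ p : Rtz,
      p ∣ (1 - tv * zv ^ 2) * (1 + tv * zv ^ 3) ^ 2 * (1 - zv + zv ^ 2) ^ 2 →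
      p ∣ (1 - tv * zv ^ 2) * (1 - tv * zv ^ 2 + 2 * tv * zv ^ 3 - tv * zv ^ 4) →
      p ∣ (1 + tv * zv ^ 3) * (1 - zv + zv ^ 2) ^ 2 * (1 - zv) →
      p = 1 ∨ p = -1 := by
  intro p hA hB hC
  -- a combination of the second and third polynomials that only involves `z`
  have hkey : zv ^ 6 * (1 - zv + zv ^ 2) ^ 2 * (1 - zv) *
        ((1 - tv * zv ^ 2) * (1 - tv * zv ^ 2 + 2 * tv * zv ^ 3 - tv * zv ^ 4)) +
      (-((zv ^ 4 - 2 * zv ^ 5 + zv ^ 6) * zv ^ 3 * tv +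
          (-2 * zv ^ 2 + 2 * zv ^ 3 - zv ^ 4) * zv ^ 3 - (zv ^ 4 - 2 * zv ^ 5 + zv ^ 6))) *
        ((1 + tv * zv ^ 3) * (1 - zv + zv ^ 2) ^ 2 * (1 - zv)) =
      zv ^ 4 * (1 + zv ^ 3) * (1 - zv + zv ^ 2) ^ 2 * (1 - zv) := by
    ring
  have hF : p ∣ zv ^ 4 * (1 + zv ^ 3) * (1 - zv + zv ^ 2) ^ 2 * (1 - zv) := by
    rw [← hkey]
    exact dvd_add (hB.mul_left _) (hC.mul_left _)
  obtain ⟨q, hq⟩ := hF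
  obtain ⟨qB, hqB⟩ := hB
  have ht : (finSuccEquiv ℤ 1) tv = Polynomial.X := by
    rw [tv, finSuccEquiv_X_zero]
  have hz : (finSuccEquiv ℤ 1) zv = Polynomial.C (X 0) := by
    rw [zv, show (1 : Fin 2) = Fin.succ 0 from rfl, finSuccEquiv_X_succ]
  -- the combination is nonzero
  have hFne : zv ^ 4 * (1 + zv ^ 3) * (1 - zv + zv ^ 2) ^ 2 * (1 - zv) ≠ (0 : Rtz) := by
    intro h
    have h2 := congrArg (MvPolynomial.eval fun _ : Fin 2 => (2 : ℤ)) h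
    simp [zv] at h2
  -- its image under `finSuccEquiv` is a constant polynomial
  have heF : (finSuccEquiv ℤ 1) (zv ^ 4 * (1 + zv ^ 3) * (1 - zv + zv ^ 2) ^ 2 * (1 - zv)) =
      Polynomial.C ((X 0 : MvPolynomial (Fin 1) ℤ) ^ 4 * (1 + (X 0) ^ 3) *
        (1 - X 0 + (X 0) ^ 2) ^ 2 * (1 - X 0)) := by
    simp only [map_mul, map_pow, map_add, map_sub, map_one, hz, Polynomial.C_mul,
      Polynomial.C_pow, Polynomial.C_add, Polynomial.C_sub, Polynomial.C_1]
  -- hence `p` maps to a constant polynomial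
  set e := finSuccEquiv ℤ 1 with he
  have hepq : e p * e q = Polynomial.C ((X 0 : MvPolynomial (Fin 1) ℤ) ^ 4 * (1 + (X 0) ^ 3) *
      (1 - X 0 + (X 0) ^ 2) ^ 2 * (1 - X 0)) := by
    rw [← map_mul, ← hq, heF]
  have hCne : e p * e q ≠ 0 := by
    rw [← map_mul, ← hq]
    exact fun h => hFne (by simpa using (e.injective (h.trans (map_zero e).symm)))
  have hepne : e p ≠ 0 := left_ne_zero_of_mul hCne
  have heqne : e q ≠ 0 := right_ne_zero_of_mul hCne
  have hdeg : (e p).natDegree + (e q).natDegree = 0 := by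
    have h3 := Polynomial.natDegree_mul hepne heqne
    rw [hepq, Polynomial.natDegree_C] at h3
    omega
  obtain ⟨a, ha⟩ := Polynomial.natDegree_eq_zero.mp (Nat.eq_zero_of_add_eq_zero_right hdeg)
  -- evaluate the divisibility of the second polynomial at `t = 0`
  have hBval : Polynomial.eval 0 (e ((1 - tv * zv ^ 2) *
      (1 - tv * zv ^ 2 + 2 * tv * zv ^ 3 - tv * zv ^ 4))) = 1 := by
    simp [map_mul, map_pow, map_add, map_sub, map_one, ht, hz]
  have hunit : IsUnit a := by
    apply IsUnit.of_mul_eq_one (a := a) (Polynomial.eval 0 (e qB))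
    have h4 : (1 : MvPolynomial (Fin 1) ℤ) = a * Polynomial.eval 0 (e qB) := by
      rw [← hBval, hqB, map_mul, ← ha, Polynomial.eval_mul, Polynomial.eval_C]
    exact h4.symm
  have hup : IsUnit p := by
    have h5 : IsUnit (e p) := by rw [← ha]; exact Polynomial.isUnit_C.mpr hunit
    have h6 := h5.map e.symm
    rwa [AlgEquiv.symm_apply_apply] at h6
  exact unit_pm_Rtz p hup
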